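/- Let P be a Köthe set on a set I with P ≺ P². Then the space λ^∞(P) = { a ∈ ℂ^I : ‖a‖_p^∞ := sup_{i∈I} |a_i| p_i < ∞ for all p ∈ P } is closed under pointwise multiplication, and for every p ∈ P there exist q ∈ P and C > 0 such that sup_{i∈I} |a_i b_i| p_i ≤ C (sup_{i∈I} |a_i| q_i)(sup_{i∈I} |b_i| q_i) for all a, b ∈ λ^∞(P). -/

import Mathlib

/-- If `P ≺ P²`, then `λ^∞(P)` is closed under pointwise multiplication, and
for every `p ∈ P` there are `q ∈ P` and `C > 0` with
`sup_i |aᵢbᵢ| pᵢ ≤ C (sup_i |aᵢ| qᵢ)(sup_i |bᵢ| qᵢ)` for all `a, b ∈ λ^∞(P)`. -/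
theorem kothe_infty_mul_estimate {I : Type*} (P : Set (I → ℝ))
    (hP0 : ∀ p ∈ P, ∀ i, 0 ≤ p i)
    (hP1 : ∀ i, ∃ p ∈ P, 0 < p i)
    (hP2 : ∀ p ∈ P, ∀ q ∈ P, ∃ r ∈ P, ∀ i, max (p i) (q i) ≤ r i)
    (hPP2 : ∀ p ∈ P, ∃ q ∈ P, ∃ C : ℝ, 0 < C ∧ ∀ i, p i ≤ C * (q i) ^ 2) :
    (∀ a b : I → ℂ,
      (∀ p ∈ P, ∃ M : ℝ, ∀ i, ‖a i‖ * p i ≤ M) →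
      (∀ p ∈ P, ∃ M : ℝ, ∀ i, ‖b i‖ * p i ≤ M) →
      (∀ p ∈ P, ∃ M : ℝ, ∀ i, ‖a i * b i‖ * p i ≤ M)) ∧
    (∀ p ∈ P, ∃ q ∈ P, ∃ C : ℝ, 0 < C ∧
      ∀ a b : I → ℂ,
        (∀ p' ∈ P, ∃ M : ℝ, ∀ i, ‖a i‖ * p' i ≤ M) →
        (∀ p' ∈ P, ∃ M : ℝ, ∀ i, ‖b i‖ * p' i ≤ M) →
        (⨆ i, ‖a i * b i‖ * p i) ≤
          C * (⨆ i, ‖a i‖ * q i) * (⨆ i, ‖b i‖ * q i)) := by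
  constructor
  · intro a b ha hb p hp
    obtain ⟨q, hq, C, hC, hpq⟩ := hPP2 p hp
    obtain ⟨Ma, hMa⟩ := ha q hq
    obtain ⟨Mb, hMb⟩ := hb q hq
    refine ⟨C * Ma * Mb, fun i => ?_⟩
    have hqi := hP0 q hq i
    have hA : (0:ℝ) ≤ ‖a i‖ := norm_nonneg _
    calc ‖a i * b i‖ * p i
        = ‖a i‖ * ‖b i‖ * p i := by rw [norm_mul]
      _ ≤ ‖a i‖ * ‖b i‖ * (C * q i ^ 2) :=
          mul_le_mul_of_nonneg_left (hpq i) (by positivity)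
      _ = C * ((‖a i‖ * q i) * (‖b i‖ * q i)) := by ring
      _ ≤ C * (Ma * Mb) := by
          refine mul_le_mul_of_nonneg_left ?_ hC.le
          exact mul_le_mul (hMa i) (hMb i) (by positivity)
            ((by positivity : (0:ℝ) ≤ ‖a i‖ * q i).trans (hMa i))
      _ = C * Ma * Mb := by ring
  · intro p hp
    obtain ⟨q, hq, C, hC, hpq⟩ := hPP2 p hp
    refine ⟨q, hq, C, hC, fun a b ha hb => ?_⟩
    obtain ⟨Ma, hMa⟩ := ha q hq
    obtain ⟨Mb, hMb⟩ := hb q hq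
    by_cases hI : Nonempty I
    · have bddA : BddAbove (Set.range fun i => ‖a i‖ * q i) :=
        ⟨Ma, by rintro _ ⟨i, rfl⟩; exact hMa i⟩
      have bddB : BddAbove (Set.range fun i => ‖b i‖ * q i) :=
        ⟨Mb, by rintro _ ⟨i, rfl⟩; exact hMb i⟩
      have hSa : ∀ i, ‖a i‖ * q i ≤ ⨆ i, ‖a i‖ * q i :=
        fun i => le_ciSup bddA i
      have hSb : ∀ i, ‖b i‖ * q i ≤ ⨆ i, ‖b i‖ * q i :=
        fun i => le_ciSup bddB i
      obtain ⟨i0⟩ := hI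
      have hSa0 : (0:ℝ) ≤ ⨆ i, ‖a i‖ * q i :=
        le_trans (mul_nonneg (norm_nonneg _) (hP0 q hq i0)) (hSa i0)
      haveI : Nonempty I := ⟨i0⟩
      apply ciSup_le
      intro i
      have hqi := hP0 q hq i
      calc ‖a i * b i‖ * p i
          = ‖a i‖ * ‖b i‖ * p i := by rw [norm_mul]
        _ ≤ ‖a i‖ * ‖b i‖ * (C * q i ^ 2) :=
            mul_le_mul_of_nonneg_left (hpq i) (by positivity)
        _ = C * ((‖a i‖ * q i) * (‖b i‖ * q i)) := by ring
        _ ≤ C * ((⨆ i, ‖a i‖ * q i) * (⨆ i, ‖b i‖ * q i)) := by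
            refine mul_le_mul_of_nonneg_left ?_ hC.le
            exact mul_le_mul (hSa i) (hSb i) (by positivity) hSa0
        _ = C * (⨆ i, ‖a i‖ * q i) * (⨆ i, ‖b i‖ * q i) := by ring
    · have : IsEmpty I := not_nonempty_iff.mp hI
      haveI : IsEmpty I := not_nonempty_iff.mp hI
      rw [iSup_of_empty', iSup_of_empty', iSup_of_empty', Real.sSup_empty]
      simp
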